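/- Assume D = 0 and T = 1, fix ρ > 0 and let Ω = { x ∈ ℝ^L : x_i ≥ 0 for all i and ∑_i x_i = ρ·L }. Let a : [0,∞) → ℝ^L be a differentiable solution of a'(t) = f(a(t)) with a(0) ∈ Ω. Then a(t) ∈ Ω for all t > 0, and a(t) converges to the set of critical points in Ω as t → ∞: the distance from a(t) to the set E = { x ∈ Ω : f(x) = 0 } tends to 0 as t → ∞. -/

import Mathlib

open Finset Filter

/-- `auxN G κ a i = κ + ∑_{j ~ i} a_j`. -/
noncomputable def auxN {L : ℕ} (G : SimpleGraph (Fin L)) [DecidableRel G.Adj] (κ : ℝ)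
    (a : Fin L → ℝ) (i : Fin L) : ℝ :=
  κ + ∑ j ∈ G.neighborFinset i, a j

/-- The auxin transport vector field
`f_i(a) = D·∑_{k ~ i}(a_k − a_i) + T·∑_{k ~ i}(a_k·a_i/N_k(a) − a_i·a_k/N_i(a))`. -/
noncomputable def auxF {L : ℕ} (G : SimpleGraph (Fin L)) [DecidableRel G.Adj] (κ D T : ℝ)
    (a : Fin L → ℝ) (i : Fin L) : ℝ :=
  D * ∑ k ∈ G.neighborFinset i, (a k - a i) +
    T * ∑ k ∈ G.neighborFinset i,
      (a k * a i / auxN G κ a k - a i * a k / auxN G κ a i)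



section aux
variable {L : ℕ} (G : SimpleGraph (Fin L)) [DecidableRel G.Adj] (κ : ℝ)

lemma sum_nbr_comm (F : Fin L → Fin L → ℝ) :
    ∑ i, ∑ k ∈ G.neighborFinset i, F i k = ∑ i, ∑ k ∈ G.neighborFinset i, F k i := by
  simp only [SimpleGraph.neighborFinset_eq_filter, Finset.sum_filter]
  rw [Finset.sum_comm]
  exact Finset.sum_congr rfl fun i _ => Finset.sum_congr rfl fun k _ => if_congr (G.adj_comm k i) rfl rfl

lemma auxF_eq (x : Fin L → ℝ) (i : Fin L) :
    auxF G κ 0 1 x i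
      = ∑ k ∈ G.neighborFinset i, (x k * x i / auxN G κ x k - x i * x k / auxN G κ x i) := by
  simp [auxF]

lemma sum_auxF_zero (x : Fin L → ℝ) : ∑ i, auxF G κ 0 1 x i = 0 := by
  simp only [auxF_eq, Finset.sum_sub_distrib]
  rw [sub_eq_zero, sum_nbr_comm G (fun i k => x k * x i / auxN G κ x k)]

lemma auxF_factor (x : Fin L → ℝ) (i : Fin L) :
    auxF G κ 0 1 x i
      = x i * ∑ k ∈ G.neighborFinset i, (x k / auxN G κ x k - x k / auxN G κ x i) := by
  rw [auxF_eq, Finset.mul_sum]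
  exact Finset.sum_congr rfl fun k _ => by ring

lemma auxN_pos {x : Fin L → ℝ} (hκ : 0 < κ) (hx : ∀ j, 0 ≤ x j) (i : Fin L) :
    0 < auxN G κ x i :=
  add_pos_of_pos_of_nonneg hκ (Finset.sum_nonneg fun j _ => hx j)

lemma continuous_auxN (i : Fin L) : Continuous fun x : Fin L → ℝ => auxN G κ x i :=
  continuous_const.add (continuous_finset_sum _ fun j _ => continuous_apply j)

end aux

noncomputable def auxPhi {L : ℕ} (G : SimpleGraph (Fin L)) [DecidableRel G.Adj] (κ : ℝ)
    (x : Fin L → ℝ) : ℝ :=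
  ∑ i, ∑ k ∈ G.neighborFinset i,
    x i * x k * (auxN G κ x i - auxN G κ x k) ^ 2 / (auxN G κ x i * auxN G κ x k)

section aux2
variable {L : ℕ} (G : SimpleGraph (Fin L)) [DecidableRel G.Adj] (κ : ℝ)

lemma auxPhi_nonneg {x : Fin L → ℝ} (hκ : 0 < κ) (hx : ∀ j, 0 ≤ x j) :
    0 ≤ auxPhi G κ x := by
  refine Finset.sum_nonneg fun i _ => Finset.sum_nonneg fun k _ => ?_
  exact div_nonneg (mul_nonneg (mul_nonneg (hx i) (hx k)) (sq_nonneg _))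
    (le_of_lt (mul_pos (auxN_pos G κ hκ hx i) (auxN_pos G κ hκ hx k)))

lemma auxF_zero_of_phi_zero {x : Fin L → ℝ} (hκ : 0 < κ) (hx : ∀ j, 0 ≤ x j)
    (hphi : auxPhi G κ x = 0) (i : Fin L) : auxF G κ 0 1 x i = 0 := by
  have hN : ∀ j, 0 < auxN G κ x j := auxN_pos G κ hκ hx
  have hterm : ∀ i ∈ (Finset.univ : Finset (Fin L)), ∀ k ∈ G.neighborFinset i,
      x i * x k * (auxN G κ x i - auxN G κ x k) ^ 2 / (auxN G κ x i * auxN G κ x k) = 0 := by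
    have h1 : ∀ i ∈ (Finset.univ : Finset (Fin L)),
        (0:ℝ) ≤ ∑ k ∈ G.neighborFinset i,
          x i * x k * (auxN G κ x i - auxN G κ x k) ^ 2 / (auxN G κ x i * auxN G κ x k) :=
      fun i _ => Finset.sum_nonneg fun k _ =>
        div_nonneg (mul_nonneg (mul_nonneg (hx i) (hx k)) (sq_nonneg _))
          (le_of_lt (mul_pos (hN i) (hN k)))
    have h2 := (Finset.sum_eq_zero_iff_of_nonneg h1).1 hphi
    intro i hi k hk
    have h3 : ∀ k ∈ G.neighborFinset i,
        (0:ℝ) ≤ x i * x k * (auxN G κ x i - auxN G κ x k) ^ 2 / (auxN G κ x i * auxN G κ x k) :=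
      fun k _ => div_nonneg (mul_nonneg (mul_nonneg (hx i) (hx k)) (sq_nonneg _))
        (le_of_lt (mul_pos (hN i) (hN k)))
    exact (Finset.sum_eq_zero_iff_of_nonneg h3).1 (h2 i hi) k hk
  rw [auxF_eq]
  refine Finset.sum_eq_zero fun k hk => ?_
  have h := hterm i (Finset.mem_univ i) k hk
  have hne : auxN G κ x i * auxN G κ x k ≠ 0 := ne_of_gt (mul_pos (hN i) (hN k))
  have h0 : x i * x k * (auxN G κ x i - auxN G κ x k) ^ 2 = 0 := by
    rcases div_eq_zero_iff.1 h with h' | h'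
    · exact h'
    · exact absurd h' hne
  have h1 : x i * x k * (auxN G κ x i - auxN G κ x k) = 0 := by
    rcases mul_eq_zero.1 h0 with h' | h'
    · exact mul_eq_zero_of_left h' _
    · exact mul_eq_zero_of_right _ (pow_eq_zero_iff (n := 2) (by norm_num) |>.1 h')
  have h2 : x k * x i / auxN G κ x k - x i * x k / auxN G κ x i
      = x i * x k * (auxN G κ x i - auxN G κ x k) / (auxN G κ x k * auxN G κ x i) := by
    field_simp [(hN i).ne', (hN k).ne']
  rw [h2, h1, zero_div]

lemma sum_nbr_eq (x : Fin L → ℝ) (i : Fin L) :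
    ∑ j ∈ G.neighborFinset i, x j = auxN G κ x i - κ := by
  rw [auxN]; ring

lemma deriv_V_eq (x : Fin L → ℝ) (hN : ∀ i, 0 < auxN G κ x i) :
    ∑ i, (auxF G κ 0 1 x i * (∑ j ∈ G.neighborFinset i, x j)
        + x i * ∑ j ∈ G.neighborFinset i, auxF G κ 0 1 x j)
      = auxPhi G κ x := by
  have hNe : ∀ i, auxN G κ x i ≠ 0 := fun i => ne_of_gt (hN i)
  have h1 : ∑ i, x i * ∑ j ∈ G.neighborFinset i, auxF G κ 0 1 x j
      = ∑ i, auxF G κ 0 1 x i * (∑ j ∈ G.neighborFinset i, x j) := by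
    simp only [Finset.mul_sum]
    rw [sum_nbr_comm G (fun i j => x i * auxF G κ 0 1 x j)]
    exact Finset.sum_congr rfl fun i _ => Finset.sum_congr rfl fun k _ => mul_comm _ _
  have h2 : ∑ i, auxF G κ 0 1 x i * (∑ j ∈ G.neighborFinset i, x j)
      = ∑ i, auxF G κ 0 1 x i * auxN G κ x i := by
    have : ∀ i ∈ (Finset.univ : Finset (Fin L)),
        auxF G κ 0 1 x i * (∑ j ∈ G.neighborFinset i, x j)
          = auxF G κ 0 1 x i * auxN G κ x i - auxF G κ 0 1 x i * κ := by
      intro i _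
      rw [sum_nbr_eq G κ x i]
      ring
    rw [Finset.sum_congr rfl this, Finset.sum_sub_distrib]
    have h : ∑ i, auxF G κ 0 1 x i * κ = 0 := by
      rw [← Finset.sum_mul, sum_auxF_zero, zero_mul]
    rw [h, sub_zero]
  have h3 : ∑ i, auxF G κ 0 1 x i * auxN G κ x i
      = (∑ i, ∑ k ∈ G.neighborFinset i, x i * x k * auxN G κ x i / auxN G κ x k)
        - ∑ i, ∑ k ∈ G.neighborFinset i, x i * x k := by
    rw [← Finset.sum_sub_distrib]
    refine Finset.sum_congr rfl fun i _ => ?_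
    rw [auxF_eq, Finset.sum_mul, ← Finset.sum_sub_distrib]
    refine Finset.sum_congr rfl fun k _ => ?_
    rw [sub_mul]
    congr 1
    · ring
    · rw [div_mul_cancel₀ _ (hNe i)]
  have h4 : ∑ i, ∑ k ∈ G.neighborFinset i, x i * x k * auxN G κ x i / auxN G κ x k
      = ∑ i, ∑ k ∈ G.neighborFinset i, x i * x k * auxN G κ x k / auxN G κ x i := by
    rw [sum_nbr_comm G (fun i k => x i * x k * auxN G κ x i / auxN G κ x k)]
    exact Finset.sum_congr rfl fun i _ => Finset.sum_congr rfl fun k _ => by ring_nf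
  have h5 : auxPhi G κ x
      = ∑ i, ∑ k ∈ G.neighborFinset i,
          (x i * x k * auxN G κ x i / auxN G κ x k
           + x i * x k * auxN G κ x k / auxN G κ x i
           - 2 * (x i * x k)) := by
    rw [auxPhi]
    refine Finset.sum_congr rfl fun i _ => Finset.sum_congr rfl fun k _ => ?_
    field_simp [hNe i, hNe k]
    ring
  have h6 : auxPhi G κ x
      = (∑ i, ∑ k ∈ G.neighborFinset i, x i * x k * auxN G κ x i / auxN G κ x k)
        + (∑ i, ∑ k ∈ G.neighborFinset i, x i * x k * auxN G κ x k / auxN G κ x i)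
        - 2 * ∑ i, ∑ k ∈ G.neighborFinset i, x i * x k := by
    rw [h5]
    simp only [Finset.sum_add_distrib, Finset.sum_sub_distrib, Finset.mul_sum]
  rw [Finset.sum_add_distrib, h1, h2, h3, h6]
  linarith [h4]
end aux2

section aux3
variable {L : ℕ} (G : SimpleGraph (Fin L)) [DecidableRel G.Adj] (κ : ℝ)

lemma hasDerivAt_coord {a : ℝ → Fin L → ℝ} {v : Fin L → ℝ} {t : ℝ}
    (h : HasDerivAt a v t) (i : Fin L) : HasDerivAt (fun s => a s i) (v i) t :=
  (ContinuousLinearMap.proj (R := ℝ) (φ := fun _ : Fin L => ℝ) i).hasFDerivAt.comp_hasDerivAt t h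

lemma auxN_ge {x : Fin L → ℝ} (hx : ∀ j, 0 ≤ x j) (i : Fin L) : κ ≤ auxN G κ x i :=
  le_add_of_nonneg_right (Finset.sum_nonneg fun j _ => hx j)

lemma auxF_abs_le {x : Fin L → ℝ} {M : ℝ} (hκ : 0 < κ) (hM : ∀ k, |x k| ≤ M)
    (hN : ∀ k, κ / 2 ≤ auxN G κ x k) (i : Fin L) :
    |auxF G κ 0 1 x i| ≤ (L * (M / (κ / 2) + M / (κ / 2))) * |x i| := by
  have hκ2 : (0:ℝ) < κ / 2 := by linarith
  have hM0 : 0 ≤ M := le_trans (abs_nonneg _) (hM i)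
  have hterm : ∀ k, |x k / auxN G κ x k - x k / auxN G κ x i|
      ≤ M / (κ / 2) + M / (κ / 2) := by
    intro k
    have hb : ∀ j l : Fin L, |x j / auxN G κ x l| ≤ M / (κ / 2) := by
      intro j l
      rw [abs_div, abs_of_pos (lt_of_lt_of_le hκ2 (hN l))]
      exact div_le_div₀ hM0 (hM j) hκ2 (hN l)
    calc |x k / auxN G κ x k - x k / auxN G κ x i|
        ≤ |x k / auxN G κ x k| + |x k / auxN G κ x i| := abs_sub _ _
      _ ≤ M / (κ / 2) + M / (κ / 2) := add_le_add (hb k k) (hb k i)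
  rw [auxF_factor, abs_mul, mul_comm]
  refine mul_le_mul_of_nonneg_right ?_ (abs_nonneg _)
  calc |∑ k ∈ G.neighborFinset i, (x k / auxN G κ x k - x k / auxN G κ x i)|
      ≤ ∑ k ∈ G.neighborFinset i, |x k / auxN G κ x k - x k / auxN G κ x i| :=
        Finset.abs_sum_le_sum_abs _ _
    _ ≤ ∑ k ∈ G.neighborFinset i, (M / (κ / 2) + M / (κ / 2)) :=
        Finset.sum_le_sum fun k _ => hterm k
    _ = (G.neighborFinset i).card * (M / (κ / 2) + M / (κ / 2)) := by
        rw [Finset.sum_const, nsmul_eq_mul]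
    _ ≤ L * (M / (κ / 2) + M / (κ / 2)) := by
        refine mul_le_mul_of_nonneg_right ?_ (by positivity)
        have h := Finset.card_le_univ (G.neighborFinset i)
        simp only [Finset.card_univ, Fintype.card_fin] at h
        exact_mod_cast h

lemma norm_auxF_le {x : Fin L → ℝ} {S : ℝ} (hκ : 0 < κ) (hS0 : 0 ≤ S)
    (hx : ∀ j, 0 ≤ x j) (hS : ∀ k, x k ≤ S) :
    ‖auxF G κ 0 1 x‖ ≤ (L * (S / (κ / 2) + S / (κ / 2))) * S := by
  have hM : ∀ k, |x k| ≤ S := fun k => abs_le.2 ⟨le_trans (by linarith) (hx k), hS k⟩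
  have hN : ∀ k, κ / 2 ≤ auxN G κ x k :=
    fun k => le_trans (by linarith) (auxN_ge G κ hx k)
  rw [pi_norm_le_iff_of_nonneg (by positivity)]
  intro i
  calc ‖auxF G κ 0 1 x i‖ ≤ (L * (S / (κ / 2) + S / (κ / 2))) * |x i| :=
        auxF_abs_le G κ hκ hM hN i
    _ ≤ (L * (S / (κ / 2) + S / (κ / 2))) * S :=
        mul_le_mul_of_nonneg_left (hM i) (by positivity)

lemma isCompact_Om {ρ : ℝ} :
    IsCompact {x : Fin L → ℝ | (∀ i, 0 ≤ x i) ∧ ∑ i, x i = ρ * L} := by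
  have hclosed : IsClosed {x : Fin L → ℝ | (∀ i, 0 ≤ x i) ∧ ∑ i, x i = ρ * L} := by
    have : {x : Fin L → ℝ | (∀ i, 0 ≤ x i) ∧ ∑ i, x i = ρ * L}
        = (⋂ i, (fun x : Fin L → ℝ => x i) ⁻¹' Set.Ici 0)
          ∩ ((fun x : Fin L → ℝ => ∑ i, x i) ⁻¹' {ρ * L}) := by
      ext x; simp [Set.mem_iInter]
    rw [this]
    exact IsClosed.inter
      (isClosed_iInter fun i => isClosed_Ici.preimage (continuous_apply i))
      (isClosed_singleton.preimage (continuous_finset_sum _ fun i _ => continuous_apply i))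
  refine IsCompact.of_isClosed_subset (isCompact_Icc
    (a := (0 : Fin L → ℝ)) (b := fun _ => ρ * L)) hclosed ?_
  rintro x ⟨hx0, hxs⟩
  constructor
  · intro i; exact hx0 i
  · intro i
    calc x i ≤ ∑ j, x j := Finset.single_le_sum (fun j _ => hx0 j) (Finset.mem_univ i)
      _ = ρ * L := hxs

lemma continuousOn_auxPhi (hκ : 0 < κ) :
    ContinuousOn (auxPhi G κ) {x : Fin L → ℝ | ∀ i, 0 ≤ x i} := by
  unfold auxPhi
  apply continuousOn_finset_sum
  intro i _
  apply continuousOn_finset_sum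
  intro k _
  apply ContinuousOn.div
  · exact (((continuous_apply i).mul (continuous_apply k)).mul
      (((continuous_auxN G κ i).sub (continuous_auxN G κ k)).pow 2)).continuousOn
  · exact ((continuous_auxN G κ i).mul (continuous_auxN G κ k)).continuousOn
  · intro x hx
    exact ne_of_gt (mul_pos (auxN_pos G κ hκ hx i) (auxN_pos G κ hκ hx k))
end aux3

/-- For pure transport (`D = 0`, `T = 1`), the simplex
`Ω = {x : x ≥ 0, ∑ x_i = ρL}` is invariant and every solution starting in `Ω` converges to
the set of critical points in `Ω`: the distance to `E = {x ∈ Ω : f(x) = 0}` tends to `0`. -/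
theorem auxin_converges_to_critical_set {L : ℕ} (hL : 1 ≤ L) (G : SimpleGraph (Fin L))
    [DecidableRel G.Adj] (κ : ℝ) (hκ : 0 < κ) (ρ : ℝ) (hρ : 0 < ρ)
    (a : ℝ → Fin L → ℝ)
    (hderiv : ∀ t, 0 ≤ t → HasDerivAt a (auxF G κ 0 1 (a t)) t)
    (h0 : (∀ i, 0 ≤ a 0 i) ∧ ∑ i, a 0 i = ρ * L) :
    (∀ t, 0 < t → (∀ i, 0 ≤ a t i) ∧ ∑ i, a t i = ρ * L) ∧
    Filter.Tendsto
      (fun t => Metric.infDist (a t)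
        {x : Fin L → ℝ |
          ((∀ i, 0 ≤ x i) ∧ ∑ i, x i = ρ * L) ∧ ∀ i, auxF G κ 0 1 x i = 0})
      Filter.atTop (nhds 0) := by
  have hL0 : (0:ℝ) < L := by exact_mod_cast hL
  have hρL : 0 < ρ * L := mul_pos hρ hL0
  have hcont : ∀ t : ℝ, 0 ≤ t → ContinuousAt a t := fun t ht => (hderiv t ht).continuousAt
  have hconti : ∀ (i : Fin L) (t : ℝ), 0 ≤ t → ContinuousAt (fun s => a s i) t :=
    fun i t ht => (continuous_apply i).continuousAt.comp (hcont t ht)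
  -- sum conservation
  have hsumderiv : ∀ t, 0 ≤ t → HasDerivAt (fun s => ∑ i, a s i) 0 t := by
    intro t ht
    have h := HasDerivAt.fun_sum
      (fun (i : Fin L) (_ : i ∈ Finset.univ) => hasDerivAt_coord (hderiv t ht) i)
    rwa [sum_auxF_zero] at h
  have hsum : ∀ t, 0 ≤ t → ∑ i, a t i = ρ * L := by
    intro t ht
    rcases eq_or_lt_of_le ht with rfl | ht'
    · exact h0.2
    · have h := constant_of_has_deriv_right_zero (f := fun s => ∑ i, a s i) (a := 0) (b := t)
        (fun s hs => ((hsumderiv s hs.1).continuousAt).continuousWithinAt)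
        (fun s hs => (hsumderiv s hs.1).hasDerivWithinAt)
      exact (h t ⟨ht, le_rfl⟩).trans h0.2
  -- nonnegativity
  have hpos : ∀ t, 0 ≤ t → ∀ i, 0 ≤ a t i := by
    by_contra hneg
    push_neg at hneg
    obtain ⟨t₁, ht₁, i₁, hi₁⟩ := hneg
    set Sbad := {t : ℝ | 0 ≤ t ∧ ∃ i, a t i < 0} with hSbad
    have hSne : Sbad.Nonempty := ⟨t₁, ht₁, i₁, hi₁⟩
    have hSbdd : BddBelow Sbad := ⟨0, fun u hu => hu.1⟩
    set τ := sInf Sbad with hτdef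
    have hτ0 : 0 ≤ τ := le_csInf hSne fun u hu => hu.1
    have hτle : ∀ u ∈ Sbad, τ ≤ u := fun u hu => csInf_le hSbdd hu
    have hτnn : ∀ i, 0 ≤ a τ i := by
      by_contra h
      push_neg at h
      obtain ⟨i, hi⟩ := h
      have hev : {u : ℝ | a u i < 0} ∈ nhds τ := (hconti i τ hτ0) (Iio_mem_nhds hi)
      obtain ⟨δ, hδ0, hδ⟩ := Metric.mem_nhds_iff.1 hev
      rcases eq_or_lt_of_le hτ0 with h0' | hτpos
      · exact absurd hi (not_lt.2 (h0' ▸ h0.1 i))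
      · set u := max (τ - δ / 2) (τ / 2) with hu
        have hu0 : 0 ≤ u := le_trans (by linarith) (le_max_right _ _)
        have huτ : u < τ := max_lt (by linarith) (by linarith)
        have hud : u ∈ Metric.ball τ δ := by
          rw [Metric.mem_ball, Real.dist_eq, abs_of_nonpos (by linarith [le_max_left (τ - δ/2) (τ/2)])]
          have := le_max_left (τ - δ / 2) (τ / 2)
          linarith
        have : u ∈ Sbad := ⟨hu0, i, hδ hud⟩
        exact absurd (hτle u this) (not_le.2 huτ)
    have hτub : ∀ i, a τ i ≤ ρ * L := by
      intro i
      calc a τ i ≤ ∑ j, a τ j := Finset.single_le_sum (fun j _ => hτnn j) (Finset.mem_univ i)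
        _ = ρ * L := hsum τ hτ0
    set η := min 1 (κ / (2 * L)) with hη
    have hη0 : 0 < η := lt_min one_pos (by positivity)
    have hη1 : η ≤ 1 := min_le_left _ _
    have hη2 : η ≤ κ / (2 * L) := min_le_right _ _
    obtain ⟨δ, hδ0, hδ⟩ := Metric.continuousAt_iff.1 (hcont τ hτ0) η hη0
    obtain ⟨s, hsS, hs⟩ := (csInf_lt_iff hSbdd hSne).1
      (show sInf Sbad < τ + δ by rw [← hτdef]; linarith)
    obtain ⟨i, his⟩ := hsS.2
    have hs0 : 0 ≤ s := hsS.1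
    have hτs : τ ≤ s := hτle s hsS
    have hτs' : τ < s := by
      rcases eq_or_lt_of_le hτs with rfl | h
      · exact absurd his (not_lt.2 (hτnn i))
      · exact h
    -- window bounds
    have hwin : ∀ u ∈ Set.Icc τ s,
        (∀ k, |a u k| ≤ ρ * L + 1) ∧ ∀ k, κ / 2 ≤ auxN G κ (a u) k := by
      intro u hu
      have hd : dist u τ < δ := by
        rw [Real.dist_eq, abs_of_nonneg (by linarith [hu.1])]
        linarith [hu.2]
      have h1 := hδ hd
      have hk : ∀ k, |a u k - a τ k| < η := fun k =>
        lt_of_le_of_lt (by rw [← Real.dist_eq]; exact dist_le_pi_dist (a u) (a τ) k) h1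
      constructor
      · intro k
        have h2 := abs_lt.1 (hk k)
        have h3 := hτnn k
        have h4 := hτub k
        rw [abs_le]
        constructor <;> linarith
      · intro k
        have h4 : ∀ j, -η ≤ a u j := by
          intro j
          have := abs_lt.1 (hk j)
          linarith [hτnn j]
        have h5 : ((G.neighborFinset k).card : ℝ) * (-η) ≤ ∑ j ∈ G.neighborFinset k, a u j := by
          have := Finset.card_nsmul_le_sum (G.neighborFinset k) (a u) (-η) fun j _ => h4 j
          rwa [nsmul_eq_mul] at this
        have hcard : ((G.neighborFinset k).card : ℝ) ≤ L := by
          have h := Finset.card_le_univ (G.neighborFinset k)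
          simp only [Finset.card_univ, Fintype.card_fin] at h
          exact_mod_cast h
        have h6 : (L : ℝ) * (-η) ≤ ((G.neighborFinset k).card : ℝ) * (-η) :=
          mul_le_mul_of_nonpos_right hcard (by linarith)
        have h7 : (L : ℝ) * η ≤ κ / 2 := by
          have := mul_le_mul_of_nonneg_left hη2 (le_of_lt hL0)
          calc (L:ℝ) * η ≤ (L:ℝ) * (κ / (2 * L)) := this
            _ = κ / 2 := by field_simp
        rw [auxN]
        nlinarith
    -- the Gronwall contradiction
    set Z := {u : ℝ | u ∈ Set.Icc τ s ∧ 0 ≤ a u i} with hZ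
    have hZne : Z.Nonempty := ⟨τ, ⟨le_rfl, hτs⟩, hτnn i⟩
    have hZbdd : BddAbove Z := ⟨s, fun u hu => hu.1.2⟩
    have hZclosed : IsClosed Z := by
      have hca : ContinuousOn (fun u => a u i) (Set.Icc τ s) := fun u hu =>
        (hconti i u (by linarith [hu.1])).continuousWithinAt
      have h := hca.preimage_isClosed_of_isClosed isClosed_Icc
        (isClosed_Ici (a := (0:ℝ)))
      have heq : Z = Set.Icc τ s ∩ (fun u => a u i) ⁻¹' Set.Ici 0 := by
        ext u
        simp [hZ, Set.mem_setOf_eq]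
      rw [heq]
      exact h
    set σ := sSup Z with hσdef
    have hσZ : σ ∈ Z := hZclosed.csSup_mem hZne hZbdd
    have hσs : σ ≤ s := hσZ.1.2
    have hσ0 : 0 ≤ σ := le_trans hτ0 hσZ.1.1
    have hσlt : σ < s := by
      rcases eq_or_lt_of_le hσs with h | h
      · exact absurd (h ▸ hσZ.2) (not_le.2 his)
      · exact h
    have hneg' : ∀ u, σ < u → u ≤ s → a u i < 0 := by
      intro u h1 h2
      by_contra h
      push_neg at h
      exact absurd (le_csSup hZbdd ⟨⟨le_trans hσZ.1.1 h1.le, h2⟩, h⟩) (not_le.2 h1)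
    have hσv : a σ i = 0 := by
      rcases eq_or_lt_of_le hσZ.2 with h | h
      · exact h.symm
      · exfalso
        have hev : {u : ℝ | 0 < a u i} ∈ nhds σ := (hconti i σ hσ0) (Ioi_mem_nhds h)
        obtain ⟨δ', hδ'0, hδ'⟩ := Metric.mem_nhds_iff.1 hev
        set u := min (σ + δ' / 2) s with huu
        have h1 : σ < u := lt_min (by linarith) hσlt
        have h2 : u ≤ s := min_le_right _ _
        have h3 : u ∈ Metric.ball σ δ' := by
          rw [Metric.mem_ball, Real.dist_eq, abs_of_nonneg (by linarith)]
          have := min_le_left (σ + δ' / 2) s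
          linarith
        exact absurd (hδ' h3) (not_lt.2 (hneg' u h1 h2).le)
    set C := (L : ℝ) * ((ρ * L + 1) / (κ / 2) + (ρ * L + 1) / (κ / 2)) with hC
    have key := norm_le_gronwallBound_of_norm_deriv_right_le (f := fun u => a u i)
      (f' := fun u => auxF G κ 0 1 (a u) i) (δ := 0) (K := C) (ε := 0) (a := σ) (b := s)
      (fun u hu => (hconti i u (by linarith [hu.1])).continuousWithinAt)
      (fun u hu => (hasDerivAt_coord (hderiv u (by linarith [hu.1])) i).hasDerivWithinAt)
      (by show ‖a σ i‖ ≤ 0; rw [Real.norm_eq_abs, hσv, abs_zero])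
      (by
        intro u hu
        have hw := hwin u ⟨le_trans hσZ.1.1 hu.1, hu.2.le⟩
        have := auxF_abs_le G κ hκ hw.1 hw.2 i
        rw [Real.norm_eq_abs, Real.norm_eq_abs, add_zero]
        exact this)
      s ⟨hσs, le_rfl⟩
    rw [gronwallBound_ε0_δ0] at key
    rw [Real.norm_eq_abs] at key
    have := abs_nonneg (a s i)
    have h8 : a s i = 0 := abs_eq_zero.1 (le_antisymm key this)
    linarith
  have hub : ∀ t, 0 ≤ t → ∀ k, a t k ≤ ρ * L := by
    intro t ht k
    calc a t k ≤ ∑ j, a t j := Finset.single_le_sum (fun j _ => hpos t ht j) (Finset.mem_univ k)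
      _ = ρ * L := hsum t ht
  refine ⟨fun t ht => ⟨hpos t ht.le, hsum t ht.le⟩, ?_⟩
  -- the Lyapunov function
  set g : ℝ → ℝ := fun t => -∑ i, a t i * ∑ j ∈ G.neighborFinset i, a t j with hgdef
  have hgderiv : ∀ t, 0 ≤ t → HasDerivAt g (-auxPhi G κ (a t)) t := by
    intro t ht
    have hterm : ∀ i ∈ (Finset.univ : Finset (Fin L)),
        HasDerivAt (fun s => a s i * ∑ j ∈ G.neighborFinset i, a s j)
          (auxF G κ 0 1 (a t) i * (∑ j ∈ G.neighborFinset i, a t j)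
            + a t i * ∑ j ∈ G.neighborFinset i, auxF G κ 0 1 (a t) j) t :=
      fun i _ => (hasDerivAt_coord (hderiv t ht) i).mul
        (HasDerivAt.fun_sum fun j _ => hasDerivAt_coord (hderiv t ht) j)
    have h := (HasDerivAt.fun_sum hterm).neg
    rw [deriv_V_eq G κ (a t) (auxN_pos G κ hκ (hpos t ht))] at h
    exact h
  have hganti : AntitoneOn g (Set.Ici 0) := by
    apply antitoneOn_of_deriv_nonpos (convex_Ici 0)
    · exact fun t ht => (hgderiv t ht).continuousAt.continuousWithinAt
    · rw [interior_Ici]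
      exact fun t ht => (hgderiv t (le_of_lt ht)).differentiableAt.differentiableWithinAt
    · intro t ht
      rw [interior_Ici] at ht
      rw [(hgderiv t ht.le).deriv]
      exact neg_nonpos.2 (auxPhi_nonneg G κ hκ (hpos t ht.le))
  have hgbdd : ∀ t, 0 ≤ t → -(ρ * L * (ρ * L)) ≤ g t := by
    intro t ht
    have h1 : ∑ i, a t i * ∑ j ∈ G.neighborFinset i, a t j ≤ ρ * L * (ρ * L) := by
      calc ∑ i, a t i * ∑ j ∈ G.neighborFinset i, a t j
          ≤ ∑ i, a t i * (ρ * L) := Finset.sum_le_sum fun i _ => by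
            refine mul_le_mul_of_nonneg_left ?_ (hpos t ht i)
            calc ∑ j ∈ G.neighborFinset i, a t j
                ≤ ∑ j, a t j := Finset.sum_le_sum_of_subset_of_nonneg
                  (Finset.subset_univ _) (fun j _ _ => hpos t ht j)
              _ = ρ * L := hsum t ht
        _ = ρ * L * (ρ * L) := by rw [← Finset.sum_mul, hsum t ht]
    show -(ρ * L * (ρ * L)) ≤ -∑ i, a t i * ∑ j ∈ G.neighborFinset i, a t j
    linarith
  set c := sInf (g '' Set.Ici 0) with hcdef
  have hgne : (g '' Set.Ici 0).Nonempty := ⟨g 0, 0, Set.self_mem_Ici, rfl⟩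
  have hgbddB : BddBelow (g '' Set.Ici 0) := by
    refine ⟨-(ρ * L * (ρ * L)), ?_⟩
    rintro y ⟨t, ht, rfl⟩
    exact hgbdd t ht
  have hglim : Tendsto g atTop (nhds c) := by
    rw [Metric.tendsto_atTop]
    intro ε hε
    obtain ⟨y, ⟨t₀, ht₀, rfl⟩, hy⟩ := exists_lt_of_csInf_lt hgne
      (show sInf (g '' Set.Ici 0) < c + ε by rw [← hcdef]; linarith)
    refine ⟨t₀, fun t ht => ?_⟩
    have h1 : g t ≤ g t₀ := hganti ht₀ (Set.mem_Ici.2 (le_trans (Set.mem_Ici.1 ht₀) ht)) ht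
    have h2 : c ≤ g t := csInf_le hgbddB ⟨t, le_trans (Set.mem_Ici.1 ht₀) ht, rfl⟩
    rw [Real.dist_eq, abs_lt]
    constructor <;> linarith
  -- Lipschitz bound for the trajectory
  set Mf := ((L : ℝ) * (ρ * L / (κ / 2) + ρ * L / (κ / 2))) * (ρ * L) with hMf
  have hMf0 : 0 ≤ Mf := by positivity
  have halip : ∀ t ∈ Set.Ici (0:ℝ), ∀ u ∈ Set.Ici (0:ℝ), ‖a u - a t‖ ≤ Mf * ‖u - t‖ := by
    intro t ht u hu
    exact (convex_Ici 0).norm_image_sub_le_of_norm_hasDerivWithin_le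
      (fun v hv => (hderiv v hv).hasDerivWithinAt)
      (fun v hv => norm_auxF_le G κ hκ hρL.le (hpos v hv) (hub v hv))
      ht hu
  -- final convergence
  rw [Metric.tendsto_atTop]
  intro ε hε
  set E := {x : Fin L → ℝ | ((∀ i, 0 ≤ x i) ∧ ∑ i, x i = ρ * ↑L) ∧ ∀ i, auxF G κ 0 1 x i = 0}
    with hE
  set Om := {x : Fin L → ℝ | (∀ i, 0 ≤ x i) ∧ ∑ i, x i = ρ * ↑L} with hOm
  have hmemOm : ∀ t, 0 ≤ t → a t ∈ Om := fun t ht => ⟨hpos t ht, hsum t ht⟩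
  set K := Om ∩ (fun x => Metric.infDist x E) ⁻¹' Set.Ici (ε / 2) with hK
  by_cases hKne : K.Nonempty
  · -- positive case
    have hKcomp : IsCompact K := (isCompact_Om (L := L) (ρ := ρ)).inter_right
      (isClosed_Ici.preimage (Metric.continuous_infDist_pt E))
    have hKsub : K ⊆ {x : Fin L → ℝ | ∀ i, 0 ≤ x i} := fun x hx => hx.1.1
    obtain ⟨x₀, hx₀K, hx₀min⟩ := hKcomp.exists_isMinOn hKne
      ((continuousOn_auxPhi G κ hκ).mono hKsub)
    have hx₀d : ε / 2 ≤ Metric.infDist x₀ E := hx₀K.2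
    have hdlt0 : 0 < auxPhi G κ x₀ := by
      rcases eq_or_lt_of_le (auxPhi_nonneg G κ hκ hx₀K.1.1) with h | h
      · exfalso
        have hx₀E : x₀ ∈ E :=
          ⟨hx₀K.1, fun i => auxF_zero_of_phi_zero G κ hκ hx₀K.1.1 h.symm i⟩
        rw [Metric.infDist_zero_of_mem hx₀E] at hx₀d
        linarith
      · exact h
    set dlt := auxPhi G κ x₀ with hdlt
    set h₀ := (ε / 2) / (Mf + 1) with hh₀
    have hh₀0 : 0 < h₀ := by positivity
    obtain ⟨T₁, hT₁⟩ := (Metric.tendsto_atTop.1 hglim) (dlt * h₀ / 2) (by positivity)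
    refine ⟨max T₁ 0, fun t ht => ?_⟩
    have ht0 : 0 ≤ t := le_trans (le_max_right _ _) ht
    have htT : T₁ ≤ t := le_trans (le_max_left _ _) ht
    rw [Real.dist_eq, sub_zero, abs_of_nonneg Metric.infDist_nonneg]
    by_contra hcon
    push_neg at hcon
    have hd2 : ∀ u ∈ Set.Icc t (t + h₀), a u ∈ K := by
      intro u hu
      have hu0 : 0 ≤ u := le_trans ht0 hu.1
      refine ⟨hmemOm u hu0, ?_⟩
      have h1 : Metric.infDist (a t) E ≤ Metric.infDist (a u) E + dist (a t) (a u) :=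
        Metric.infDist_le_infDist_add_dist
      have h2 : dist (a t) (a u) ≤ ε / 2 := by
        rw [dist_eq_norm]
        calc ‖a t - a u‖ ≤ Mf * ‖t - u‖ := halip u hu0 t ht0
          _ ≤ Mf * h₀ := by
            refine mul_le_mul_of_nonneg_left ?_ hMf0
            rw [Real.norm_eq_abs, abs_of_nonpos (by linarith [hu.1])]
            linarith [hu.2]
          _ ≤ (Mf + 1) * h₀ := by nlinarith
          _ = ε / 2 := by
            have h' : Mf + 1 ≠ 0 := by positivity
            rw [hh₀]
            field_simp
      show Metric.infDist (a u) E ∈ Set.Ici (ε / 2)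
      rw [Set.mem_Ici]
      linarith
    have hΦ : ∀ u ∈ Set.Icc t (t + h₀), dlt ≤ auxPhi G κ (a u) :=
      fun u hu => isMinOn_iff.1 hx₀min (a u) (hd2 u hu)
    have hth : t < t + h₀ := by linarith
    obtain ⟨ξ, hξ, hslope⟩ := exists_hasDerivAt_eq_slope g (fun u => -auxPhi G κ (a u)) hth
      (fun u hu => (hgderiv u (le_trans ht0 hu.1)).continuousAt.continuousWithinAt)
      (fun u hu => hgderiv u (le_trans ht0 hu.1.le))
    rw [eq_div_iff (ne_of_gt (by linarith : (0:ℝ) < t + h₀ - t))] at hslope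
    have h4 : dlt * h₀ ≤ g t - g (t + h₀) := by
      have h5 : dlt * h₀ ≤ auxPhi G κ (a ξ) * h₀ :=
        mul_le_mul_of_nonneg_right (hΦ ξ ⟨hξ.1.le, hξ.2.le⟩) hh₀0.le
      nlinarith [hslope]
    have h5 := hT₁ t htT
    have h6 := hT₁ (t + h₀) (by linarith)
    rw [Real.dist_eq] at h5 h6
    have h5' := abs_lt.1 h5
    have h6' := abs_lt.1 h6
    clear_value g c dlt h₀ Mf K E Om
    have hA : (0:ℝ) < dlt * h₀ := mul_pos hdlt0 hh₀0
    have hB : g t - g (t + h₀) < dlt * h₀ / 2 + dlt * h₀ / 2 := by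
      have hx := h5'.2
      have hy := h6'.1
      linarith
    linarith [h4, hB]
  · -- K empty: trajectory always within ε/2
    refine ⟨0, fun t ht => ?_⟩
    have h1 : Metric.infDist (a t) E < ε / 2 := by
      by_contra h
      push_neg at h
      exact hKne ⟨a t, hmemOm t ht, Set.mem_Ici.2 h⟩
    rw [Real.dist_eq, sub_zero, abs_of_nonneg Metric.infDist_nonneg]
    linarith
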